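/- Let f : ℝⁿ → ℝ be L-smooth with lower bound f⋆, and let x^{k+1} = x^k - (1/L)∇f(x^k) for k = 1,…,N. Then min_{1≤k≤N+1} ‖∇f(x^k)‖ ≤ ( 4L(f(x¹) - f⋆) / (3N + 2) )^{1/2}. -/

import Mathlib

open scoped RealInnerProductSpace

theorem quadUB {n : ℕ} (f : EuclideanSpace ℝ (Fin n) → ℝ) (L : ℝ) (hL : 0 < L)
    (hf : Differentiable ℝ f)
    (hlip : ∀ x y, ‖gradient f x - gradient f y‖ ≤ L * ‖x - y‖)
    (y d : EuclideanSpace ℝ (Fin n)) :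
    |f (y + d) - f y - ⟪gradient f y, d⟫| ≤ L / 2 * ‖d‖ ^ 2 := by
  have hline : ∀ t : ℝ, HasDerivAt (fun t : ℝ => f (y + t • d))
      (⟪gradient f (y + t • d), d⟫) t := by
    intro t
    have h1 : HasDerivAt (fun t : ℝ => y + t • d) d t := by
      simpa using ((hasDerivAt_id t).smul_const d).const_add y
    have h2 := ((hf (y + t • d)).hasGradientAt.hasFDerivAt).comp_hasDerivAt t h1
    exact h2.congr_deriv (by simp)
  have hbound : ∀ t : ℝ, 0 ≤ t →
      |⟪gradient f (y + t • d), d⟫ - ⟪gradient f y, d⟫| ≤ L * t * ‖d‖ ^ 2 := by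
    intro t ht
    rw [← inner_sub_left]
    calc |⟪gradient f (y + t • d) - gradient f y, d⟫|
        ≤ ‖gradient f (y + t • d) - gradient f y‖ * ‖d‖ := abs_real_inner_le_norm _ _
      _ ≤ (L * ‖(y + t • d) - y‖) * ‖d‖ := by
          gcongr; exact hlip _ _
      _ = L * t * ‖d‖ ^ 2 := by
          simp [norm_smul, abs_of_nonneg ht]; ring
  -- define φ⁺ and φ⁻
  have main : ∀ (s : ℝ), s = 1 ∨ s = -1 →
      s * (f (y + d) - f y - ⟪gradient f y, d⟫) ≤ L / 2 * ‖d‖ ^ 2 := by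
    intro s hs
    set φ : ℝ → ℝ := fun t =>
      s * (f (y + t • d) - f y - t * ⟪gradient f y, d⟫) - L / 2 * t ^ 2 * ‖d‖ ^ 2 with hφ
    have hder : ∀ t : ℝ, HasDerivAt φ
        (s * (⟪gradient f (y + t • d), d⟫ - ⟪gradient f y, d⟫) - L * t * ‖d‖ ^ 2) t := by
      intro t
      have h1 : HasDerivAt (fun t : ℝ => f (y + t • d) - f y - t * ⟪gradient f y, d⟫)
          (⟪gradient f (y + t • d), d⟫ - ⟪gradient f y, d⟫) t := by
        exact (((hline t).sub_const (f y)).sub ((hasDerivAt_id t).mul_const _)).congr_deriv (by simp)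
      have h2 : HasDerivAt (fun t : ℝ => L / 2 * t ^ 2 * ‖d‖ ^ 2)
          (L * t * ‖d‖ ^ 2) t := by
        have := ((hasDerivAt_pow 2 t).const_mul (L / 2)).mul_const (‖d‖ ^ 2)
        exact this.congr_deriv (by push_cast; ring)
      exact (h1.const_mul s).sub h2
    have hanti : AntitoneOn φ (Set.Icc (0:ℝ) 1) := by
      apply antitoneOn_of_deriv_nonpos (convex_Icc 0 1)
      · have : Differentiable ℝ φ := fun t => (hder t).differentiableAt
        exact this.continuous.continuousOn
      · exact fun t ht => ((hder t).differentiableAt).differentiableWithinAt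
      · intro t ht
        rw [interior_Icc] at ht
        rw [(hder t).deriv]
        have hb := hbound t (le_of_lt ht.1)
        have : s * (⟪gradient f (y + t • d), d⟫ - ⟪gradient f y, d⟫) ≤ L * t * ‖d‖ ^ 2 := by
          rcases hs with h | h <;> rw [h] <;> cases abs_le.mp hb <;> linarith
        linarith
    have h01 := hanti (Set.mem_Icc.mpr ⟨le_refl 0, zero_le_one⟩)
      (Set.mem_Icc.mpr ⟨zero_le_one, le_refl 1⟩) zero_le_one
    simp only [hφ, one_smul, zero_smul, add_zero, smul_zero] at h01
    rcases hs with h | h <;> rw [h] at h01 ⊢ <;> nlinarith [h01]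
  rw [abs_le]
  constructor
  · have := main (-1) (Or.inr rfl); linarith
  · have := main 1 (Or.inl rfl); linarith

theorem stepIneq {n : ℕ} (f : EuclideanSpace ℝ (Fin n) → ℝ) (L : ℝ) (hL : 0 < L)
    (hf : Differentiable ℝ f)
    (hlip : ∀ x y, ‖gradient f x - gradient f y‖ ≤ L * ‖x - y‖)
    (y : EuclideanSpace ℝ (Fin n)) :
    f (y - (1 / L) • gradient f y) ≤ f y - 1 / L * (1 / 2) * ‖gradient f y‖ ^ 2
      - 1 / L * (1 / 4) * ‖gradient f (y - (1 / L) • gradient f y)‖ ^ 2 := by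
  have hL0 : L ≠ 0 := ne_of_gt hL
  obtain ⟨g, hg⟩ : ∃ g, gradient f y = g := ⟨_, rfl⟩
  obtain ⟨p, hp⟩ : ∃ p, y - (1 / L) • g = p := ⟨_, rfl⟩
  obtain ⟨h, hh⟩ : ∃ h, gradient f p = h := ⟨_, rfl⟩
  rw [hg, hp, hh]
  have e1 := quadUB f L hL hf hlip y ((-(1 / L)) • g + (1 / (2 * L)) • h)
  have e2 := quadUB f L hL hf hlip p ((1 / (2 * L)) • h)
  rw [hg] at e1
  rw [hh] at e2
  have hxh : y + ((-(1 / L)) • g + (1 / (2 * L)) • h) = p + (1 / (2 * L)) • h := by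
    rw [← hp]; module
  rw [hxh] at e1
  rw [abs_le] at e1 e2
  have sc : ∀ A B C : ℝ, L / 2 * ((1/L)*(1/L)*A - (1/L)*(1/L)*C + (1/L)*(1/L)*(1/4)*B)
      = 1/L*(1/2)*A - 1/L*(1/2)*C + 1/L*(1/8)*B := by
    intro A B C; field_simp; ring
  have hip1 : ⟪g, (-(1 / L)) • g + (1 / (2 * L)) • h⟫
      = 1/L*(-1)*‖g‖^2 + 1/L*(1/2)*⟪g, h⟫ := by
    simp only [inner_add_right, real_inner_smul_right, real_inner_self_eq_norm_sq]
    ring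
  have hip2 : ⟪h, (1 / (2 * L)) • h⟫ = 1/L*(1/2)*‖h‖^2 := by
    simp only [real_inner_smul_right, real_inner_self_eq_norm_sq]
    ring
  have hn1 : ‖(-(1 / L)) • g + (1 / (2 * L)) • h‖^2
      = (1/L)*(1/L)*‖g‖^2 - (1/L)*(1/L)*⟪g, h⟫ + (1/L)*(1/L)*(1/4)*‖h‖^2 := by
    rw [← real_inner_self_eq_norm_sq]
    simp only [inner_add_left, inner_add_right, real_inner_smul_left, real_inner_smul_right,
      real_inner_self_eq_norm_sq, real_inner_comm h g, norm_smul, Real.norm_eq_abs, mul_pow,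
      sq_abs]
    ring
  have hn2 : ‖(1 / (2 * L)) • h‖^2 = (1/L)*(1/L)*‖h‖^2 - (1/L)*(1/L)*‖h‖^2
      + (1/L)*(1/L)*(1/4)*‖h‖^2 := by
    rw [← real_inner_self_eq_norm_sq]
    simp only [real_inner_smul_left, real_inner_smul_right, real_inner_self_eq_norm_sq,
      norm_smul, Real.norm_eq_abs, mul_pow, sq_abs]
    ring
  have u1 : f (p + (1 / (2 * L)) • h) ≤ f y + (1/L*(-1)*‖g‖^2 + 1/L*(1/2)*⟪g, h⟫)
      + (1/L*(1/2)*‖g‖^2 - 1/L*(1/2)*⟪g, h⟫ + 1/L*(1/8)*‖h‖^2) := by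
    have := e1.2
    rw [hip1] at this
    have hq := sc (‖g‖^2) (‖h‖^2) ⟪g, h⟫
    rw [← hn1] at hq
    linarith
  have u2 : f p ≤ f (p + (1 / (2 * L)) • h) - 1/L*(1/2)*‖h‖^2
      + (1/L*(1/2)*‖h‖^2 - 1/L*(1/2)*‖h‖^2 + 1/L*(1/8)*‖h‖^2) := by
    have := e2.1
    rw [hip2] at this
    have hq := sc (‖h‖^2) (‖h‖^2) (‖h‖^2)
    rw [← hn2] at hq
    linarith
  linarith

theorem stmt_8 {n : ℕ} (f : EuclideanSpace ℝ (Fin n) → ℝ) (L : ℝ) (hL : 0 < L)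
    (hf : Differentiable ℝ f)
    (hlip : ∀ x y, ‖gradient f x - gradient f y‖ ≤ L * ‖x - y‖)
    (fstar : ℝ) (hlow : ∀ y, fstar ≤ f y)
    (N : ℕ) (hN : 1 ≤ N)
    (x : ℕ → EuclideanSpace ℝ (Fin n))
    (hupd : ∀ k, 1 ≤ k → k ≤ N → x (k + 1) = x k - (1 / L) • gradient f (x k)) :
    ∃ k ∈ Finset.Icc 1 (N + 1),
      ‖gradient f (x k)‖ ≤ Real.sqrt (4 * L * (f (x 1) - fstar) / (3 * N + 2)) := by
  have hL0 : L ≠ 0 := ne_of_gt hL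
  have hne : (Finset.Icc 1 (N + 1)).Nonempty := ⟨1, by simp⟩
  set m := (Finset.Icc 1 (N + 1)).inf' hne (fun k => ‖gradient f (x k)‖) with hm
  have hmle : ∀ k, 1 ≤ k → k ≤ N + 1 → m ≤ ‖gradient f (x k)‖ := by
    intro k h1 h2
    exact Finset.inf'_le _ (Finset.mem_Icc.mpr ⟨h1, h2⟩)
  have hm0 : 0 ≤ m := le_trans (by positivity : (0:ℝ) ≤ 0) <| by
    obtain ⟨k, hk, hkeq⟩ := Finset.exists_mem_eq_inf' hne (fun k => ‖gradient f (x k)‖)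
    rw [hm, hkeq]; positivity
  have hiL : (0:ℝ) < 1 / L := by positivity
  have hsq : ∀ k, 1 ≤ k → k ≤ N + 1 → m ^ 2 ≤ ‖gradient f (x k)‖ ^ 2 := by
    intro k h1 h2
    exact pow_le_pow_left₀ hm0 (hmle k h1 h2) 2
  have claim : ∀ j : ℕ, j ≤ N → f (x (j + 1)) ≤ f (x 1) - 1 / L * (3 / 4) * (j : ℝ) * m ^ 2 := by
    intro j
    induction j with
    | zero => intro _; simp
    | succ j ih =>
      intro hj
      have ihv := ih (by omega)
      have hupd' : x (j + 2) = x (j + 1) - (1 / L) • gradient f (x (j + 1)) :=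
        hupd (j + 1) (by omega) (by omega)
      have hs := stepIneq f L hL hf hlip (x (j + 1))
      rw [← hupd'] at hs
      have h1 := hsq (j + 1) (by omega) (by omega)
      have h2 := hsq (j + 2) (by omega) (by omega)
      have c1 : 1 / L * (1 / 2) * m ^ 2 ≤ 1 / L * (1 / 2) * ‖gradient f (x (j + 1))‖ ^ 2 := by
        have := hiL.le; nlinarith
      have c2 : 1 / L * (1 / 4) * m ^ 2 ≤ 1 / L * (1 / 4) * ‖gradient f (x (j + 2))‖ ^ 2 := by
        have := hiL.le; nlinarith
      have : f (x (j + 2)) ≤ f (x (j + 1)) - 1 / L * (1 / 2) * m ^ 2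
          - 1 / L * (1 / 4) * m ^ 2 := by linarith
      push_cast
      push_cast at ihv
      have goal2 : f (x (j + 2)) ≤ f (x 1) - 1 / L * (3 / 4) * ((j:ℝ) + 1) * m ^ 2 := by
        nlinarith [this, ihv]
      convert goal2 using 2 <;> push_cast <;> ring
  have hE := claim N (le_refl N)
  have hs := stepIneq f L hL hf hlip (x (N + 1))
  have hfs := hlow (x (N + 1) - (1 / L) • gradient f (x (N + 1)))
  have h1 := hsq (N + 1) (by omega) (by omega)
  have c1 : 1 / L * (1 / 2) * m ^ 2 ≤ 1 / L * (1 / 2) * ‖gradient f (x (N + 1))‖ ^ 2 := by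
    have := hiL.le; nlinarith
  have c2 : 0 ≤ 1 / L * (1 / 4) * ‖gradient f (x (N + 1) - (1 / L) • gradient f (x (N + 1)))‖ ^ 2 := by
    positivity
  have key : 1 / L * (3 / 4) * (N : ℝ) * m ^ 2 + 1 / L * (1 / 2) * m ^ 2 ≤ f (x 1) - fstar := by
    linarith
  obtain ⟨k₀, hk₀mem, hk₀⟩ := Finset.exists_mem_eq_inf' hne (fun k => ‖gradient f (x k)‖)
  refine ⟨k₀, hk₀mem, ?_⟩
  have hmeq : ‖gradient f (x k₀)‖ = m := (hk₀).symm
  rw [hmeq]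
  apply Real.le_sqrt_of_sq_le
  have h3 : (0:ℝ) < 3 * (N : ℝ) + 2 := by positivity
  have e : m ^ 2 = 4 * L * (1 / L * (3 / 4) * (N:ℝ) * m ^ 2 + 1 / L * (1 / 2) * m ^ 2)
      / (3 * (N:ℝ) + 2) := by
    field_simp
    ring
  rw [e]
  gcongr
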